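/- Let G be a connected weighted graph with nonzero weights, and decompose a cycle-space basis so that Z_G has block form [[A_M, B_{M,+}, B_{M,-}],[B_{M,+}ᵀ, Z_{G+}, 0],[B_{M,-}ᵀ, 0, Z_{G-}]], where Z_{G+} (resp. Z_{G-}) is the cycle intersection form of the subgraph of positively (resp. negatively) weighted edges. Then Z_{G+} is negative definite and Z_{G-} is positive definite; consequently n_+(Z_G) ≥ dim of the cycle space of G_- and n_+(Z_G) ≤ C - dim of the cycle space of G_+. -/

import Mathlib

open Matrix BigOperators

lemma quad_eig {N : ℕ} {A : Matrix (Fin N) (Fin N) ℝ} (hA : A.IsHermitian) (x : Fin N → ℝ) :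
    x ⬝ᵥ A *ᵥ x = ∑ i, hA.eigenvalues i * ((⇑(hA.eigenvectorBasis i)) ⬝ᵥ x) ^ 2 := by
  set b := hA.eigenvectorBasis with hb
  set c : Fin N → ℝ := fun i => (⇑(b i)) ⬝ᵥ x with hc
  have hx : x = ∑ i, c i • ⇑(b i) := by
    have h := b.sum_repr' (WithLp.toLp 2 x)
    have h2 : ∀ i, (inner ℝ (b i) (WithLp.toLp 2 x) : ℝ) = c i := by
      intro i
      simp [PiLp.inner_apply, RCLike.inner_apply, dotProduct, hc, mul_comm]
    funext k
    have h3 := congrFun (congrArg (fun (v : EuclideanSpace ℝ (Fin N)) => WithLp.ofLp v) h) k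
    simp only [WithLp.ofLp_toLp] at h3
    rw [← h3]
    have h4 : WithLp.ofLp (∑ i, (inner ℝ (b i) (WithLp.toLp 2 x) : ℝ) • b i : EuclideanSpace ℝ (Fin N)) k
        = ∑ i, (inner ℝ (b i) (WithLp.toLp 2 x) : ℝ) * (b i : Fin N → ℝ) k := by
      simp [WithLp.ofLp_sum, Finset.sum_apply]
    rw [h4, Finset.sum_apply]
    exact Finset.sum_congr rfl fun i _ => by rw [h2]; rfl
  have hAx : A *ᵥ x = ∑ i, (c i * hA.eigenvalues i) • ⇑(b i) := by
    conv_lhs => rw [hx]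
    have hms : A *ᵥ (∑ i, c i • ⇑(b i)) = ∑ i, A *ᵥ (c i • ⇑(b i)) := by
      exact map_sum A.mulVecLin (fun i => c i • ⇑(b i)) Finset.univ
    rw [hms]
    refine Finset.sum_congr rfl fun i _ => ?_
    rw [mulVec_smul, hA.mulVec_eigenvectorBasis, smul_smul, mul_comm (c i)]
  rw [hAx]
  have hds : x ⬝ᵥ (∑ i, (c i * hA.eigenvalues i) • ⇑(b i)) = ∑ i, (c i * hA.eigenvalues i) * (x ⬝ᵥ ⇑(b i)) := by
    simp only [dotProduct, Finset.sum_apply, Pi.smul_apply, smul_eq_mul, Finset.mul_sum]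
    rw [Finset.sum_comm]
    exact Finset.sum_congr rfl fun i _ =>
      Finset.sum_congr rfl fun k _ => by ring
  rw [hds]
  refine Finset.sum_congr rfl fun i _ => ?_
  rw [dotProduct_comm]
  show c i * hA.eigenvalues i * c i = hA.eigenvalues i * c i ^ 2
  ring

lemma inertia_pos {N : ℕ} {A : Matrix (Fin N) (Fin N) ℝ} (hA : A.IsHermitian)
    (W : Submodule ℝ (Fin N → ℝ)) (hW : ∀ x ∈ W, x ≠ 0 → 0 < x ⬝ᵥ A *ᵥ x) :
    Module.finrank ℝ W ≤ (Finset.univ.filter fun i => 0 < hA.eigenvalues i).card := by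
  classical
  set P := (Finset.univ.filter fun i => 0 < hA.eigenvalues i) with hP
  let f : W →ₗ[ℝ] (↥P → ℝ) :=
    { toFun := fun w i => (⇑(hA.eigenvectorBasis (i : Fin N))) ⬝ᵥ (w : Fin N → ℝ)
      map_add' := by intro u v; funext i; simp [dotProduct_add]
      map_smul' := by intro c u; funext i; simp [dotProduct_smul] }
  have hinj : Function.Injective f := by
    rw [← LinearMap.ker_eq_bot, LinearMap.ker_eq_bot']
    intro w hw
    by_contra hw0
    have hx0 : (w : Fin N → ℝ) ≠ 0 := fun h => hw0 (Subtype.ext h)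
    have hpos := hW w w.2 hx0
    have hle : (w : Fin N → ℝ) ⬝ᵥ A *ᵥ (w : Fin N → ℝ) ≤ 0 := by
      rw [quad_eig hA]
      apply Finset.sum_nonpos
      intro i _
      by_cases hi : 0 < hA.eigenvalues i
      · have : (⇑(hA.eigenvectorBasis i)) ⬝ᵥ (w : Fin N → ℝ) = 0 := by
          have := congrFun hw (⟨i, by simp [hP, hi]⟩ : ↥P)
          simpa [f] using this
        simp [this]
      · push_neg at hi
        have : (0:ℝ) ≤ ((⇑(hA.eigenvectorBasis i)) ⬝ᵥ (w : Fin N → ℝ))^2 := sq_nonneg _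
        nlinarith
    linarith
  calc Module.finrank ℝ W ≤ Module.finrank ℝ (↥P → ℝ) :=
        LinearMap.finrank_le_finrank_of_injective hinj
    _ = P.card := by rw [Module.finrank_fintype_fun_eq_card, Fintype.card_coe]

lemma inertia_neg {N : ℕ} {A : Matrix (Fin N) (Fin N) ℝ} (hA : A.IsHermitian)
    (W : Submodule ℝ (Fin N → ℝ)) (hW : ∀ x ∈ W, x ≠ 0 → x ⬝ᵥ A *ᵥ x < 0) :
    Module.finrank ℝ W ≤ (Finset.univ.filter fun i => hA.eigenvalues i < 0).card := by
  classical
  set P := (Finset.univ.filter fun i => hA.eigenvalues i < 0) with hP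
  let f : W →ₗ[ℝ] (↥P → ℝ) :=
    { toFun := fun w i => (⇑(hA.eigenvectorBasis (i : Fin N))) ⬝ᵥ (w : Fin N → ℝ)
      map_add' := by intro u v; funext i; simp [dotProduct_add]
      map_smul' := by intro c u; funext i; simp [dotProduct_smul] }
  have hinj : Function.Injective f := by
    rw [← LinearMap.ker_eq_bot, LinearMap.ker_eq_bot']
    intro w hw
    by_contra hw0
    have hx0 : (w : Fin N → ℝ) ≠ 0 := fun h => hw0 (Subtype.ext h)
    have hpos := hW w w.2 hx0
    have hle : 0 ≤ (w : Fin N → ℝ) ⬝ᵥ A *ᵥ (w : Fin N → ℝ) := by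
      rw [quad_eig hA]
      apply Finset.sum_nonneg
      intro i _
      by_cases hi : hA.eigenvalues i < 0
      · have : (⇑(hA.eigenvectorBasis i)) ⬝ᵥ (w : Fin N → ℝ) = 0 := by
          have := congrFun hw (⟨i, by simp [hP, hi]⟩ : ↥P)
          simpa [f] using this
        simp [this]
      · push_neg at hi
        have : (0:ℝ) ≤ ((⇑(hA.eigenvectorBasis i)) ⬝ᵥ (w : Fin N → ℝ))^2 := sq_nonneg _
        nlinarith
    linarith
  calc Module.finrank ℝ W ≤ Module.finrank ℝ (↥P → ℝ) :=
        LinearMap.finrank_le_finrank_of_injective hinj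
    _ = P.card := by rw [Module.finrank_fintype_fun_eq_card, Fintype.card_coe]

lemma dot_submatrix {N : ℕ} (M : Matrix (Fin N) (Fin N) ℝ) (J : Finset (Fin N)) (x : Fin N → ℝ)
    (hx : ∀ j, j ∉ J → x j = 0) :
    (fun j : ↥J => x j) ⬝ᵥ ((M.submatrix (fun j : ↥J => (j : Fin N)) (fun j : ↥J => (j : Fin N))) *ᵥ (fun j : ↥J => x j))
      = x ⬝ᵥ M *ᵥ x := by
  simp only [dotProduct, mulVec, submatrix_apply]
  have inner_eq : ∀ j : Fin N, (∑ k : ↥J, M j k * x k) = ∑ k : Fin N, M j k * x k := by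
    intro j
    rw [Finset.sum_coe_sort J (fun k => M j k * x k)]
    exact Finset.sum_subset (Finset.subset_univ J) (fun k _ hk => by rw [hx k hk, mul_zero])
  calc (∑ j : ↥J, x j * ∑ k : ↥J, M j k * x k)
      = ∑ j : ↥J, x j * ∑ k : Fin N, M j k * x k := by
        exact Finset.sum_congr rfl fun j _ => by rw [inner_eq]
    _ = ∑ j ∈ J, x j * ∑ k : Fin N, M j k * x k :=
        Finset.sum_coe_sort J (fun j => x j * ∑ k : Fin N, M j k * x k)
    _ = ∑ j : Fin N, x j * ∑ k : Fin N, M j k * x k :=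
        Finset.sum_subset (Finset.subset_univ J) (fun j _ hj => by rw [hx j hj, zero_mul])

def suppSub {N : ℕ} (J : Finset (Fin N)) : Submodule ℝ (Fin N → ℝ) where
  carrier := {x | ∀ j, j ∉ J → x j = 0}
  add_mem' := by intro a b ha hb j hj; simp [ha j hj, hb j hj]
  zero_mem' := by intro j hj; rfl
  smul_mem' := by intro c a ha j hj; simp [ha j hj]

lemma finrank_suppSub {N : ℕ} (J : Finset (Fin N)) :
    Module.finrank ℝ (suppSub J) = J.card := by
  classical
  let f : (suppSub J) →ₗ[ℝ] (↥J → ℝ) :=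
    { toFun := fun w j => (w : Fin N → ℝ) j
      map_add' := by intro u v; funext j; rfl
      map_smul' := by intro c u; funext j; rfl }
  have hbij : Function.Bijective f := by
    constructor
    · intro u v huv
      apply Subtype.ext
      funext j
      by_cases hj : j ∈ J
      · exact congrFun huv ⟨j, hj⟩
      · rw [u.2 j hj, v.2 j hj]
    · intro y
      refine ⟨⟨fun j => if h : j ∈ J then y ⟨j, h⟩ else 0, ?_⟩, ?_⟩
      · intro j hj; simp [hj]
      · funext j; simp [f]
  have e := LinearEquiv.ofBijective f hbij
  rw [e.finrank_eq, Module.finrank_fintype_fun_eq_card, Fintype.card_coe]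

lemma block_posdef {m N : ℕ} (Y : Matrix (Fin m) (Fin N) ℝ)
    (hYindep : LinearIndependent ℝ (fun j => Yᵀ j))
    (d : Fin m → ℝ) (hd : ∀ e, d e ≠ 0)
    (S : Submodule ℝ (Fin m → ℝ)) (hS0 : ∀ x ∈ S, ∀ e, d e < 0 → x e = 0)
    (J : Finset (Fin N)) (hJ : ∀ j ∈ J, Yᵀ j ∈ S) :
    ((Yᵀ * Matrix.diagonal d * Y).submatrix (fun j : ↥J => (j : Fin N))
      (fun j : ↥J => (j : Fin N))).PosDef := by
  classical
  rw [posDef_iff_dotProduct_mulVec]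
  constructor
  · apply Matrix.IsHermitian.submatrix
    have hY : Yᵀ = Yᴴ := by ext i j; simp [conjTranspose_apply]
    rw [hY]
    exact Matrix.isHermitian_conjTranspose_mul_mul Y (Matrix.isHermitian_diagonal d)
  · intro x hx
    have hstar : star x = x := by funext j; simp
    rw [hstar]
    set xt : Fin N → ℝ := fun j => if h : j ∈ J then x ⟨j, h⟩ else 0 with hxt
    have hsupp : ∀ j, j ∉ J → xt j = 0 := by intro j hj; simp [hxt, hj]
    have hrestrict : (fun j : ↥J => xt j) = x := by
      funext j; simp [hxt, j.2]
    have key : x ⬝ᵥ ((Yᵀ * Matrix.diagonal d * Y).submatrix (fun j : ↥J => (j : Fin N))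
        (fun j : ↥J => (j : Fin N)) *ᵥ x) = xt ⬝ᵥ (Yᵀ * Matrix.diagonal d * Y) *ᵥ xt := by
      rw [← hrestrict]
      exact dot_submatrix _ J xt hsupp
    rw [key]
    set v : Fin m → ℝ := Y *ᵥ xt with hv
    have form_eq : xt ⬝ᵥ (Yᵀ * Matrix.diagonal d * Y) *ᵥ xt = ∑ e, d e * (v e)^2 := by
      rw [← mulVec_mulVec, ← mulVec_mulVec, dotProduct_mulVec, vecMul_transpose]
      simp only [dotProduct, mulVec_diagonal, ← hv]
      exact Finset.sum_congr rfl fun e _ => by ring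
    rw [form_eq]
    have hvcomb : v = ∑ j, xt j • Yᵀ j := by
      funext e
      rw [Finset.sum_apply]
      simp only [Pi.smul_apply, smul_eq_mul, transpose_apply]
      simp only [hv, mulVec, dotProduct]
      exact Finset.sum_congr rfl fun j _ => by ring
    have hvS : v ∈ S := by
      rw [hvcomb]
      apply Submodule.sum_mem
      intro j _
      by_cases hj : j ∈ J
      · exact Submodule.smul_mem _ _ (hJ j hj)
      · rw [hsupp j hj, zero_smul]; exact Submodule.zero_mem _
    have hv0 : ∀ e, d e < 0 → v e = 0 := hS0 v hvS
    have hvne : v ≠ 0 := by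
      intro h0
      apply hx
      have hxt0 : xt = 0 := by
        have := Fintype.linearIndependent_iff.mp hYindep xt (by rw [← hvcomb]; exact h0)
        funext j; exact this j
      rw [← hrestrict, hxt0]
      funext j; rfl
    obtain ⟨e0, he0⟩ : ∃ e, v e ≠ 0 := by
      by_contra h
      push_neg at h
      exact hvne (funext h)
    have hd0 : 0 < d e0 := by
      rcases lt_trichotomy (d e0) 0 with h | h | h
      · exact absurd (hv0 e0 h) he0
      · exact absurd h (hd e0)
      · exact h
    apply Finset.sum_pos'
    · intro e _
      by_cases h : d e < 0
      · rw [hv0 e h]; simp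
      · push_neg at h
        positivity
    · exact ⟨e0, Finset.mem_univ _, by positivity⟩

/-- Block structure of the cycle form: choose a basis `Y` of the cycle space whose columns
indexed by `Jp` (resp. `Jm`) form a basis of the cycle space `S₊` of the positively-weighted
subgraph (resp. `S₋` of the negatively-weighted subgraph).  Then the corresponding diagonal
block `Z_{G₊}` of `Z_G` is negative definite and `Z_{G₋}` is positive definite; consequently
`dim S₋ ≤ n₊(Z_G) ≤ C - dim S₊`. -/
theorem cycle_form_blocks
    (n m : ℕ) (tail head : Fin m → Fin n) (γ : Fin m → ℝ)
    (hγ : ∀ e, γ e ≠ 0)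
    (hloop : ∀ e, tail e ≠ head e)
    (hsimple : ∀ e f : Fin m,
      ({tail e, head e} : Finset (Fin n)) = {tail f, head f} → e = f)
    (hconn : (SimpleGraph.fromRel (fun v w => ∃ e, tail e = v ∧ head e = w)).Connected)
    (B : Matrix (Fin n) (Fin m) ℝ)
    (hB : ∀ v e, B v e = if v = tail e then 1 else if v = head e then -1 else 0)
    (Y : Matrix (Fin m) (Fin (m + 1 - n)) ℝ)
    (hYindep : LinearIndependent ℝ (fun j => Yᵀ j))
    (hYspan : Submodule.span ℝ (Set.range fun j => Yᵀ j) = LinearMap.ker B.mulVecLin)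
    (Z : Matrix (Fin (m + 1 - n)) (Fin (m + 1 - n)) ℝ)
    (hZdef : Z = -(Yᵀ * Matrix.diagonal (fun e => (γ e)⁻¹) * Y))
    (hZ : Z.IsHermitian)
    (Splus Sminus : Submodule ℝ (Fin m → ℝ))
    (hSp : ∀ x, x ∈ Splus ↔ (B.mulVec x = 0 ∧ ∀ e, γ e < 0 → x e = 0))
    (hSm : ∀ x, x ∈ Sminus ↔ (B.mulVec x = 0 ∧ ∀ e, 0 < γ e → x e = 0))
    (Jp Jm : Finset (Fin (m + 1 - n)))
    (hJp : Submodule.span ℝ (Set.range fun j : ↥Jp => Yᵀ (j : Fin (m + 1 - n))) = Splus)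
    (hJm : Submodule.span ℝ (Set.range fun j : ↥Jm => Yᵀ (j : Fin (m + 1 - n))) = Sminus) :
    (-(Z.submatrix (fun j : ↥Jp => (j : Fin (m + 1 - n)))
        (fun j : ↥Jp => (j : Fin (m + 1 - n))))).PosDef
    ∧ (Z.submatrix (fun j : ↥Jm => (j : Fin (m + 1 - n)))
        (fun j : ↥Jm => (j : Fin (m + 1 - n)))).PosDef
    ∧ Module.finrank ℝ Sminus ≤ (Finset.univ.filter fun i => 0 < hZ.eigenvalues i).card
    ∧ (Finset.univ.filter fun i => 0 < hZ.eigenvalues i).card + Module.finrank ℝ Splus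
        ≤ m + 1 - n := by
  classical
  have hJpmem : ∀ j ∈ Jp, Yᵀ j ∈ Splus := fun j hj => by
    rw [← hJp]; exact Submodule.subset_span ⟨⟨j, hj⟩, rfl⟩
  have hJmmem : ∀ j ∈ Jm, Yᵀ j ∈ Sminus := fun j hj => by
    rw [← hJm]; exact Submodule.subset_span ⟨⟨j, hj⟩, rfl⟩
  -- part 1
  have part1 : (-(Z.submatrix (fun j : ↥Jp => (j : Fin (m + 1 - n)))
      (fun j : ↥Jp => (j : Fin (m + 1 - n))))).PosDef := by
    have h := block_posdef Y hYindep (fun e => (γ e)⁻¹) (fun e => inv_ne_zero (hγ e)) Splus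
      (fun x hx e he => ((hSp x).mp hx).2 e (inv_lt_zero.mp he)) Jp hJpmem
    have heq : -(Z.submatrix (fun j : ↥Jp => (j : Fin (m + 1 - n)))
        (fun j : ↥Jp => (j : Fin (m + 1 - n))))
        = (Yᵀ * Matrix.diagonal (fun e => (γ e)⁻¹) * Y).submatrix
          (fun j : ↥Jp => (j : Fin (m + 1 - n))) (fun j : ↥Jp => (j : Fin (m + 1 - n))) := by
      ext i j
      simp [hZdef, submatrix_apply]
    rw [heq]
    exact h
  -- part 2
  have hZalt : Z = Yᵀ * Matrix.diagonal (fun e => -(γ e)⁻¹) * Y := by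
    rw [hZdef]
    have : Matrix.diagonal (fun e => -(γ e)⁻¹) = -(Matrix.diagonal (fun e => (γ e)⁻¹)) := by
      ext i j
      by_cases h : i = j <;> simp [Matrix.diagonal, h]
    rw [this, Matrix.mul_neg, Matrix.neg_mul]
  have part2 : (Z.submatrix (fun j : ↥Jm => (j : Fin (m + 1 - n)))
      (fun j : ↥Jm => (j : Fin (m + 1 - n)))).PosDef := by
    have h := block_posdef Y hYindep (fun e => -(γ e)⁻¹)
      (fun e => neg_ne_zero.mpr (inv_ne_zero (hγ e))) Sminus
      (fun x hx e he => ((hSm x).mp hx).2 e (inv_pos.mp (by linarith)))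
      Jm hJmmem
    rw [hZalt]
    exact h
  -- ranks of Splus, Sminus
  have hlip : LinearIndependent ℝ (fun j : ↥Jp => Yᵀ (j : Fin (m + 1 - n))) :=
    hYindep.comp _ Subtype.val_injective
  have hlim : LinearIndependent ℝ (fun j : ↥Jm => Yᵀ (j : Fin (m + 1 - n))) :=
    hYindep.comp _ Subtype.val_injective
  have hrankp : Module.finrank ℝ Splus = Jp.card := by
    rw [← hJp, finrank_span_eq_card hlip, Fintype.card_coe]
  have hrankm : Module.finrank ℝ Sminus = Jm.card := by
    rw [← hJm, finrank_span_eq_card hlim, Fintype.card_coe]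
  -- inertia bounds
  have part3 : Jm.card ≤ (Finset.univ.filter fun i => 0 < hZ.eigenvalues i).card := by
    rw [← finrank_suppSub Jm]
    apply inertia_pos hZ
    intro x hxW hx0
    have hsupp : ∀ j, j ∉ Jm → x j = 0 := hxW
    have hres : (fun j : ↥Jm => x j) ≠ 0 := by
      intro h
      apply hx0
      funext j
      by_cases hj : j ∈ Jm
      · exact congrFun h ⟨j, hj⟩
      · exact hsupp j hj
    have hp := part2.dotProduct_mulVec_pos hres
    have hstar : star (fun j : ↥Jm => x j) = (fun j : ↥Jm => x j) := by funext j; simp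
    rw [hstar, dot_submatrix Z Jm x hsupp] at hp
    exact hp
  have part4 : Jp.card ≤ (Finset.univ.filter fun i => hZ.eigenvalues i < 0).card := by
    rw [← finrank_suppSub Jp]
    apply inertia_neg hZ
    intro x hxW hx0
    have hsupp : ∀ j, j ∉ Jp → x j = 0 := hxW
    have hres : (fun j : ↥Jp => x j) ≠ 0 := by
      intro h
      apply hx0
      funext j
      by_cases hj : j ∈ Jp
      · exact congrFun h ⟨j, hj⟩
      · exact hsupp j hj
    have hp := part1.dotProduct_mulVec_pos hres
    have hstar : star (fun j : ↥Jp => x j) = (fun j : ↥Jp => x j) := by funext j; simp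
    rw [hstar] at hp
    rw [Matrix.neg_mulVec, dotProduct_neg] at hp
    have := dot_submatrix Z Jp x hsupp
    rw [this] at hp
    linarith
  refine ⟨part1, part2, ?_, ?_⟩
  · rw [hrankm]; exact part3
  · rw [hrankp]
    have hdisj : Disjoint (Finset.univ.filter fun i => 0 < hZ.eigenvalues i)
        (Finset.univ.filter fun i => hZ.eigenvalues i < 0) := by
      rw [Finset.disjoint_left]
      intro i hi1 hi2
      simp only [Finset.mem_filter] at hi1 hi2
      linarith [hi1.2, hi2.2]
    have hsum : (Finset.univ.filter fun i => 0 < hZ.eigenvalues i).card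
        + (Finset.univ.filter fun i => hZ.eigenvalues i < 0).card ≤ m + 1 - n := by
      rw [← Finset.card_union_of_disjoint hdisj]
      calc ((Finset.univ.filter fun i => 0 < hZ.eigenvalues i)
            ∪ (Finset.univ.filter fun i => hZ.eigenvalues i < 0)).card
          ≤ (Finset.univ : Finset (Fin (m + 1 - n))).card :=
            Finset.card_le_card (Finset.subset_univ _)
        _ = m + 1 - n := by rw [Finset.card_univ, Fintype.card_fin]
    omega
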